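/- Define y(t) = ∑_{n=1}^∞ H_n · t^n/(1−2n) for |t| < 1. Then for every real t with 0 < t < 1, the function g(t) = y(t²)/t is differentiable at t with derivative g'(t) = log(1−t²)/(t²·(1−t²)). -/

import Mathlib

open Real

open Finset

lemma harmonic_cast_le (n : ℕ) : (harmonic n : ℝ) ≤ n := by
  rw [harmonic]
  push_cast
  calc (∑ i ∈ Finset.range n, ((i:ℝ) + 1)⁻¹) ≤ ∑ i ∈ Finset.range n, 1 := by
        refine Finset.sum_le_sum fun i _ => ?_
        rw [inv_le_one_iff₀]; right; linarith [Nat.cast_nonneg (α := ℝ) i]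
    _ = n := by simp

lemma hasSum_harmonic {x : ℝ} (hx : |x| < 1) :
    HasSum (fun n : ℕ => (harmonic (n + 1) : ℝ) * x ^ (n + 1))
      (-Real.log (1 - x) * (1 - x)⁻¹) := by
  have hb : Summable fun n : ℕ => ‖x ^ n‖ := by
    simpa [Real.norm_eq_abs, abs_pow] using summable_geometric_of_lt_one (abs_nonneg x) hx
  have ha : Summable fun n : ℕ => ‖x ^ (n + 1) / (n + 1 : ℕ)‖ := by
    refine Summable.of_nonneg_of_le (fun n => norm_nonneg _) (fun n => ?_) (hb.mul_left |x|)
    rw [Real.norm_eq_abs, abs_div, abs_pow, pow_succ, mul_comm]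
    refine div_le_self (by positivity) ?_ |>.trans_eq rfl |>.trans ?_
    · rw [Nat.abs_cast]; exact_mod_cast Nat.one_le_iff_ne_zero.mpr (Nat.succ_ne_zero n)
    · simp [Real.norm_eq_abs, abs_pow]
  have key := hasSum_sum_range_mul_of_summable_norm ha hb
  have h1 : (∑' n : ℕ, x ^ (n + 1) / (n + 1 : ℕ)) = -Real.log (1 - x) := by
    have := hasSum_pow_div_log_of_abs_lt_one hx
    simpa using this.tsum_eq
  have h2 : (∑' n : ℕ, x ^ n) = (1 - x)⁻¹ := tsum_geometric_of_abs_lt_one hx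
  rw [h1, h2] at key
  convert key using 2 with n
  · rfl
  rw [harmonic]
  push_cast
  rw [Finset.sum_mul]
  refine Finset.sum_congr rfl fun k hk => ?_
  rw [Finset.mem_range] at hk
  have hkn : k + 1 + (n - k) = n + 1 := by omega
  rw [div_mul_eq_mul_div, ← pow_add, hkn, div_eq_mul_inv, mul_comm]

/-- `y(t) = ∑_{n=1}^∞ Hₙ tⁿ/(1-2n)`. -/
noncomputable def y (t : ℝ) : ℝ :=
  ∑' n : ℕ, (harmonic (n + 1) : ℝ) * t ^ (n + 1) / (1 - 2 * (n + 1))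

theorem stmt13 (t : ℝ) (ht0 : 0 < t) (ht1 : t < 1) :
    HasDerivAt (fun s : ℝ => y (s ^ 2) / s)
      (Real.log (1 - t ^ 2) / (t ^ 2 * (1 - t ^ 2))) t := by
  set r : ℝ := (t + 1) / 2 with hrdef
  have hr0 : 0 < r := by positivity
  have htr : t < r := by rw [hrdef]; linarith
  have hr1 : r < 1 := by rw [hrdef]; linarith
  have hr2 : r ^ 2 < 1 := by nlinarith
  have ht2 : t ^ 2 < 1 := by nlinarith
  have ht2ne : (1 : ℝ) - t ^ 2 ≠ 0 := by nlinarith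
  have htne : t ≠ 0 := ne_of_gt ht0
  have hden : ∀ n : ℕ, (1 : ℝ) - 2 * ((n : ℝ) + 1) = -(2 * n + 1) := fun n => by ring
  have hdenne : ∀ n : ℕ, (1 : ℝ) - 2 * ((n : ℝ) + 1) ≠ 0 := by
    intro n; rw [hden]
    have : (0:ℝ) < 2 * n + 1 := by positivity
    linarith
  have hHle : ∀ n : ℕ, |(harmonic (n + 1) : ℝ)| ≤ (n : ℝ) + 1 := by
    intro n
    have h0 : (0:ℚ) ≤ harmonic (n + 1) := (harmonic_pos (Nat.succ_ne_zero n)).le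
    rw [abs_of_nonneg (by exact_mod_cast h0)]
    have := harmonic_cast_le (n + 1)
    push_cast at this ⊢; linarith
  have hru : ‖r ^ 2‖ < 1 := by
    rw [Real.norm_eq_abs, abs_of_nonneg (by positivity)]; exact hr2
  have hsumu : Summable (fun n : ℕ => ((n : ℝ) + 1) * (r ^ 2) ^ n) := by
    have h1 := summable_pow_mul_geometric_of_norm_lt_one 1 hru
    have h2 : Summable fun n : ℕ => (r ^ 2) ^ n :=
      summable_geometric_of_lt_one (by positivity) hr2
    refine (h1.add h2).congr fun n => ?_
    push_cast; ring
  have hderiv : ∀ n : ℕ, ∀ s ∈ Set.Ioo (-r) r,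
      HasDerivAt (fun z : ℝ => (harmonic (n + 1) : ℝ) / (1 - 2 * ((n : ℝ) + 1)) * z ^ (2 * n + 1))
        (-((harmonic (n + 1) : ℝ) * s ^ (2 * n))) s := by
    intro n s _
    have h := (hasDerivAt_pow (2 * n + 1) s).const_mul
      ((harmonic (n + 1) : ℝ) / (1 - 2 * ((n : ℝ) + 1)))
    refine h.congr_deriv ?_; symm
    have h2n : 2 * n + 1 - 1 = 2 * n := by omega
    rw [h2n, div_mul_eq_mul_div, eq_div_iff (hdenne n), hden n]
    push_cast
    ring
  have hbound : ∀ n : ℕ, ∀ s ∈ Set.Ioo (-r) r,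
      ‖-((harmonic (n + 1) : ℝ) * s ^ (2 * n))‖ ≤ ((n : ℝ) + 1) * (r ^ 2) ^ n := by
    intro n s hs
    have habs : |s| ≤ r := by rw [abs_le]; exact ⟨hs.1.le, hs.2.le⟩
    rw [norm_neg, Real.norm_eq_abs, abs_mul]
    have h2 : |s ^ (2 * n)| ≤ (r ^ 2) ^ n := by
      rw [abs_pow, pow_mul]
      exact pow_le_pow_left₀ (by positivity) (pow_le_pow_left₀ (abs_nonneg s) habs 2) n
    exact mul_le_mul (hHle n) h2 (abs_nonneg _) (by positivity)
  have hsum0 : Summable (fun n : ℕ =>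
      (harmonic (n + 1) : ℝ) / (1 - 2 * ((n : ℝ) + 1)) * t ^ (2 * n + 1)) := by
    refine Summable.of_norm_bounded hsumu fun n => ?_
    rw [Real.norm_eq_abs, abs_mul, abs_div]
    have hd : |1 - 2 * ((n : ℝ) + 1)| = 2 * n + 1 := by
      rw [hden, abs_neg, abs_of_pos (by positivity)]
    rw [hd]
    have h2 : |t ^ (2 * n + 1)| ≤ (r ^ 2) ^ n := by
      rw [abs_of_nonneg (pow_nonneg ht0.le _), pow_succ, pow_mul]
      calc (t ^ 2) ^ n * t ≤ (t ^ 2) ^ n * 1 :=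
            mul_le_mul_of_nonneg_left ht1.le (by positivity)
        _ = (t ^ 2) ^ n := mul_one _
        _ ≤ (r ^ 2) ^ n := pow_le_pow_left₀ (sq_nonneg t) (by nlinarith) n
    calc |(harmonic (n + 1) : ℝ)| / (2 * n + 1) * |t ^ (2 * n + 1)|
        ≤ |(harmonic (n + 1) : ℝ)| * |t ^ (2 * n + 1)| := by
          refine mul_le_mul_of_nonneg_right ?_ (abs_nonneg _)
          refine div_le_self (abs_nonneg _) ?_
          have : (0:ℝ) ≤ (n:ℝ) := Nat.cast_nonneg n
          linarith
      _ ≤ ((n : ℝ) + 1) * (r ^ 2) ^ n := mul_le_mul (hHle n) h2 (abs_nonneg _) (by positivity)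
  have htmem : t ∈ Set.Ioo (-r) r := ⟨by linarith, htr⟩
  have D := hasDerivAt_tsum_of_isPreconnected hsumu isOpen_Ioo isPreconnected_Ioo
    hderiv hbound htmem hsum0 htmem
  -- identify the derivative value
  have hSum : HasSum (fun n : ℕ => -((harmonic (n + 1) : ℝ) * t ^ (2 * n)))
      (Real.log (1 - t ^ 2) / (t ^ 2 * (1 - t ^ 2))) := by
    have h := ((hasSum_harmonic (x := t ^ 2)
      (by rw [abs_of_nonneg (sq_nonneg t)]; exact ht2)).div_const (t ^ 2)).neg
    have hfun : (fun n : ℕ => -((harmonic (n + 1) : ℝ) * (t ^ 2) ^ (n + 1) / t ^ 2))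
        = fun n : ℕ => -((harmonic (n + 1) : ℝ) * t ^ (2 * n)) := by
      funext n
      rw [pow_succ, pow_mul]
      field_simp
    have hval : -(-Real.log (1 - t ^ 2) * (1 - t ^ 2)⁻¹ / t ^ 2)
        = Real.log (1 - t ^ 2) / (t ^ 2 * (1 - t ^ 2)) := by
      rw [neg_mul, neg_div, neg_neg, ← div_eq_mul_inv, div_div, mul_comm (1 - t ^ 2) (t ^ 2)]
    rw [hfun, hval] at h
    exact h
  rw [← hSum.tsum_eq]
  -- identify the function near t
  refine D.congr_of_eventuallyEq ?_
  have hmem : Set.Ioo (0:ℝ) 1 ∈ nhds t := Ioo_mem_nhds ht0 ht1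
  filter_upwards [hmem] with s hs
  have hs0 : (0:ℝ) < s := hs.1
  have hsne : s ≠ 0 := ne_of_gt hs0
  rw [y, ← tsum_div_const]
  congr 1 with n
  have hpow : (s ^ 2) ^ (n + 1) = s ^ (2 * n + 1) * s := by ring
  rw [hpow]
  field_simp
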